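/- For every list ops of Booleans, the open-chain AND-OR network with operator list ops and the open-chain AND-OR network with the entrywise-negated operator list ops.map(¬) have the same number of fixed points, i.e., F(ops) = F(ops.map(¬)). -/

import Mathlib

/-- The open-chain AND-OR network map determined by an operator list `ops`
(`true` = AND, `false` = OR), on `ops.length + 2` nodes. -/
def chainMap (ops : List Bool) (x : Fin (ops.length + 2) → Bool) :
    Fin (ops.length + 2) → Bool := fun i =>
  if h0 : (i : ℕ) = 0 then x ⟨1, by omega⟩
  else if hn : (i : ℕ) = ops.length + 1 then x ⟨ops.length, by omega⟩
  else
    have hi : 1 ≤ (i : ℕ) ∧ (i : ℕ) ≤ ops.length := by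
      have := i.isLt; omega
    if ops.get ⟨(i : ℕ) - 1, by omega⟩
    then x ⟨(i : ℕ) - 1, by omega⟩ && x ⟨(i : ℕ) + 1, by omega⟩
    else x ⟨(i : ℕ) - 1, by omega⟩ || x ⟨(i : ℕ) + 1, by omega⟩

/-- `F ops` is the number of fixed points of the open-chain AND-OR network. -/
noncomputable def F (ops : List Bool) : ℕ :=
  Nat.card {x : Fin (ops.length + 2) → Bool // chainMap ops x = x}

/-- Run-length encoding: block `j` (1-based) consists of `k_j` copies of
`true` if `j` is odd and `false` if `j` is even. -/
def runOps : List ℕ → List Bool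
  | [] => []
  | k :: t => List.replicate k true ++ (runOps t).map (fun b => !b)

/-- `Fr L` = 𝔉(L), the number of fixed points of the open-chain AND-OR
network with run-length list `L`. -/
noncomputable def Fr (L : List ℕ) : ℕ := F (runOps L)

/-- negating every operator does not change the number of
fixed points of an open-chain AND-OR network. -/
theorem andor_open_chain_negation_invariant (ops : List Bool) :
    F ops = F (ops.map (fun b => !b)) := by
  have hlen2 : (ops.map (fun b => !b)).length + 2 = ops.length + 2 := by
    simp
  have ptwise : ∀ (x : Fin (ops.length + 2) → Bool)
      (i : Fin ((ops.map (fun b => !b)).length + 2)),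
      chainMap (ops.map (fun b => !b)) (fun j => !(x (Fin.cast hlen2 j))) i
        = !(chainMap ops x (Fin.cast hlen2 i)) := by
    intro x i
    unfold chainMap
    simp only [Fin.coe_cast, List.length_map, List.get_eq_getElem, List.getElem_map]
    split_ifs with h0 hn hop1 hop2 hop3
    · rfl
    · rfl
    · simp_all
    · rw [Bool.not_or]; rfl
    · rw [Bool.not_and]; rfl
    · simp_all
  have key : ∀ x : Fin (ops.length + 2) → Bool,
      chainMap ops x = x ↔
      chainMap (ops.map (fun b => !b)) (fun i => !(x (Fin.cast hlen2 i)))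
        = (fun i => !(x (Fin.cast hlen2 i))) := by
    intro x
    constructor
    · intro hx
      funext i
      rw [ptwise, hx]
    · intro hx
      funext i
      have := congrFun hx (Fin.cast hlen2.symm i)
      rw [ptwise] at this
      simp only [Fin.cast_cast, Fin.cast_eq_self] at this
      exact Bool.not_inj this
  unfold F
  refine Nat.card_eq_of_bijective
    (fun p => ⟨fun i => !(p.1 (Fin.cast hlen2 i)), (key p.1).mp p.2⟩) ?_
  constructor
  · rintro ⟨x, hx⟩ ⟨y, hy⟩ h
    simp only [Subtype.mk_eq_mk] at h ⊢
    funext i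
    have := congrFun h (Fin.cast hlen2.symm i)
    simp only [Fin.cast_cast, Fin.cast_eq_self] at this
    exact Bool.not_inj this
  · rintro ⟨y, hy⟩
    refine ⟨⟨fun i => !(y (Fin.cast hlen2.symm i)), ?_⟩, ?_⟩
    · rw [key]
      simpa only [Fin.cast_cast, Fin.cast_eq_self, Bool.not_not] using hy
    · apply Subtype.ext
      funext i
      simp
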